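/- Let A_B ∈ ℝ^{m×n₂} with m ≤ n₂, let Θ_B ∈ ℝ^{n₂×n₂} be diagonal with strictly positive diagonal entries, and let D* ∈ ℝ^{m×m} be diagonal with strictly positive diagonal entries. Then the symmetric matrix M̄ = [[−Θ_B^{-1}, A_Bᵀ],[A_B, D*]] has exactly n₂ negative and m positive eigenvalues, and: (i) every negative eigenvalue μ̄ satisfies μ̄ ≤ −min_j (Θ_B^{-1})_{jj} and μ̄ ≥ (1/2)( (min_i D*_{ii} − max_j (Θ_B^{-1})_{jj}) − [ (max_j (Θ_B^{-1})_{jj} + min_i D*_{ii})² + 4σ_max(A_B)² ]^{1/2} ); (ii) every positive eigenvalue μ̄ satisfies μ̄ ≤ (1/2)( max_i D*_{ii} + [ (max_i D*_{ii})² + 4σ_max(A_B)² ]^{1/2} ) and μ̄ ≥ (1/2)( (min_i D*_{ii} − max_j (Θ_B^{-1})_{jj}) + [ (max_j (Θ_B^{-1})_{jj} + min_i D*_{ii})² + 4σ_min(A_B)² ]^{1/2} ). -/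

import Mathlib

open Matrix

/-- Spectral norm (largest singular value) of a real matrix. -/
noncomputable def specNorm {m n : ℕ} (A : Matrix (Fin m) (Fin n) ℝ) : ℝ :=
  Real.sqrt (⨆ i, (Matrix.isHermitian_mul_conjTranspose_self A).eigenvalues i)

/-- Smallest singular value of A (for m ≤ n): σ_min(A)² = λ_min(A Aᵀ). -/
noncomputable def sigMin {m n : ℕ} (A : Matrix (Fin m) (Fin n) ℝ) : ℝ :=
  Real.sqrt (⨅ i, (Matrix.isHermitian_mul_conjTranspose_self A).eigenvalues i)

lemma sqBound {a s : ℝ} (h : a^2 ≤ s^2) (hs : 0 ≤ s) : -s ≤ a ∧ a ≤ s := by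
  have h1 : |a| ≤ s := by
    have h2 := Real.sqrt_le_sqrt h
    rwa [Real.sqrt_sq_eq_abs, Real.sqrt_sq_eq_abs, abs_of_nonneg hs] at h2
  exact abs_le.mp h1

lemma quadLB {μ b c : ℝ} (h : μ^2 + b*μ + c ≤ 0) :
    (-b - Real.sqrt (b^2 - 4*c)) / 2 ≤ μ ∧ μ ≤ (-b + Real.sqrt (b^2 - 4*c)) / 2 := by
  have hdisc : 0 ≤ b^2 - 4*c := by nlinarith [sq_nonneg (2*μ + b)]
  have hs2 : Real.sqrt (b^2 - 4*c) ^ 2 = b^2 - 4*c := Real.sq_sqrt hdisc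
  have hs0 : 0 ≤ Real.sqrt (b^2 - 4*c) := Real.sqrt_nonneg _
  have key : (2*μ + b)^2 ≤ Real.sqrt (b^2 - 4*c) ^ 2 := by nlinarith
  obtain ⟨h1, h2⟩ := sqBound key hs0
  constructor <;> linarith

lemma quadGE {μ b c : ℝ} (h : 0 ≤ μ^2 + b*μ + c) (hc : c ≤ 0) (hμ : 0 < μ) :
    (-b + Real.sqrt (b^2 - 4*c)) / 2 ≤ μ := by
  set s := Real.sqrt (b^2 - 4*c) with hsdef
  have hdisc : 0 ≤ b^2 - 4*c := by nlinarith
  have hs2 : s ^ 2 = b^2 - 4*c := Real.sq_sqrt hdisc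
  have hs0 : 0 ≤ s := Real.sqrt_nonneg _
  have hb : -s ≤ b ∧ b ≤ s := sqBound (by nlinarith) hs0
  have key : s^2 ≤ (2*μ + b)^2 := by nlinarith
  rcases le_or_gt 0 (2*μ + b) with hp | hn
  · have : s ≤ 2*μ + b := by
      rcases sqBound (le_of_eq rfl : (2*μ+b)^2 ≤ (2*μ+b)^2) hp with _
      nlinarith
    linarith
  · exfalso
    have h2 : 2*μ + b ≤ -s := by nlinarith
    linarith [hb.1]
lemma rayleigh {ι : Type*} [Fintype ι] [DecidableEq ι] (S : Matrix ι ι ℝ) (hS : S.IsHermitian)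
    (x : EuclideanSpace ℝ ι) :
    x ⬝ᵥ (S *ᵥ x) = ∑ i, hS.eigenvalues i * (hS.eigenvectorBasis.repr x i)^2 := by
  have hsym : ∀ (y : EuclideanSpace ℝ ι), (y : ι → ℝ) ⬝ᵥ (S *ᵥ x) = (S *ᵥ y) ⬝ᵥ (x : ι → ℝ) := by
    intro y
    rw [dotProduct_mulVec, ← mulVec_transpose]
    have : Sᵀ = S := by
      have := hS.eq
      rwa [conjTranspose_eq_transpose_of_trivial] at this
    rw [this]
  have key : ∀ i, hS.eigenvectorBasis.repr (WithLp.toLp 2 (S *ᵥ x) : EuclideanSpace ℝ ι) i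
      = hS.eigenvalues i * hS.eigenvectorBasis.repr x i := by
    intro i
    rw [OrthonormalBasis.repr_apply_apply, OrthonormalBasis.repr_apply_apply]
    have h1 : (inner ℝ (hS.eigenvectorBasis i) (WithLp.toLp 2 (S *ᵥ x) : EuclideanSpace ℝ ι) : ℝ)
        = (hS.eigenvectorBasis i : ι → ℝ) ⬝ᵥ (S *ᵥ x) := by
      simp [PiLp.inner_apply, dotProduct, mul_comm]
    have h2 : (inner ℝ (hS.eigenvectorBasis i) x : ℝ) = (hS.eigenvectorBasis i : ι → ℝ) ⬝ᵥ (x : ι → ℝ) := by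
      simp [PiLp.inner_apply, dotProduct, mul_comm]
    have hmv : S *ᵥ (hS.eigenvectorBasis i : ι → ℝ)
        = hS.eigenvalues i • (hS.eigenvectorBasis i : ι → ℝ) := hS.mulVec_eigenvectorBasis i
    rw [h1, h2, hsym (hS.eigenvectorBasis i), hmv, smul_dotProduct]
    simp [smul_eq_mul]
  have h3 : x ⬝ᵥ (S *ᵥ x) = (inner ℝ x (WithLp.toLp 2 (S *ᵥ x) : EuclideanSpace ℝ ι) : ℝ) := by
    simp [PiLp.inner_apply, dotProduct, mul_comm]
  rw [h3, ← hS.eigenvectorBasis.repr.inner_map_map x (WithLp.toLp 2 (S *ᵥ x) : EuclideanSpace ℝ ι)]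
  rw [PiLp.inner_apply]
  refine Finset.sum_congr rfl fun i _ => ?_
  rw [key i]
  simp [EuclideanSpace.inner_eq_star_dotProduct]
  ring
lemma repr_sumsq {ι : Type*} [Fintype ι] [DecidableEq ι]
    (b : OrthonormalBasis ι ℝ (EuclideanSpace ℝ ι)) (x : EuclideanSpace ℝ ι) :
    ∑ i, (b.repr x i)^2 = ∑ i, (x i)^2 := by
  have h := b.repr.inner_map_map x x
  rw [PiLp.inner_apply, PiLp.inner_apply] at h
  simpa [pow_two] using h

lemma rayleigh_le {ι : Type*} [Fintype ι] [DecidableEq ι] (S : Matrix ι ι ℝ)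
    (hS : S.IsHermitian) (x : ι → ℝ) :
    (⨅ i, hS.eigenvalues i) * ∑ i, (x i)^2 ≤ x ⬝ᵥ (S *ᵥ x) ∧
      x ⬝ᵥ (S *ᵥ x) ≤ (⨆ i, hS.eigenvalues i) * ∑ i, (x i)^2 := by
  rcases isEmpty_or_nonempty ι with hι | hι
  · simp [dotProduct]
  have hray := rayleigh S hS (WithLp.toLp 2 x)
  have hsum : ∑ i, (hS.eigenvectorBasis.repr (WithLp.toLp 2 x) i)^2 = ∑ i, (x i)^2 :=
    repr_sumsq hS.eigenvectorBasis (WithLp.toLp 2 x)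
  constructor
  · rw [hray, ← hsum, Finset.mul_sum]
    refine Finset.sum_le_sum fun i _ => ?_
    exact mul_le_mul_of_nonneg_right (ciInf_le (Set.Finite.bddBelow (Set.finite_range _)) i)
      (sq_nonneg _)
  · rw [hray, ← hsum, Finset.mul_sum]
    refine Finset.sum_le_sum fun i _ => ?_
    exact mul_le_mul_of_nonneg_right (le_ciSup (Set.Finite.bddAbove (Set.finite_range _)) i)
      (sq_nonneg _)

lemma AAt_quad {m n : ℕ} (A : Matrix (Fin m) (Fin n) ℝ) (w : Fin m → ℝ) :
    w ⬝ᵥ ((A * Aᴴ) *ᵥ w) = ∑ j, ((Aᵀ *ᵥ w) j)^2 := by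
  have hH : Aᴴ = Aᵀ := conjTranspose_eq_transpose_of_trivial A
  rw [hH, ← mulVec_mulVec, dotProduct_mulVec, ← mulVec_transpose]
  simp [dotProduct, pow_two]

lemma specNorm_nonneg {m n : ℕ} (A : Matrix (Fin m) (Fin n) ℝ) : 0 ≤ specNorm A :=
  Real.sqrt_nonneg _

lemma specNorm_sq {m n : ℕ} (A : Matrix (Fin m) (Fin n) ℝ) :
    specNorm A ^ 2 = ⨆ i, (Matrix.isHermitian_mul_conjTranspose_self A).eigenvalues i := by
  refine Real.sq_sqrt ?_
  rcases isEmpty_or_nonempty (Fin m) with h | h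
  · simp
  · exact le_trans (A.eigenvalues_self_mul_conjTranspose_nonneg (Classical.arbitrary _))
      (le_ciSup (Set.Finite.bddAbove (Set.finite_range _)) _)

lemma sigMin_sq {m n : ℕ} (A : Matrix (Fin m) (Fin n) ℝ) :
    sigMin A ^ 2 = ⨅ i, (Matrix.isHermitian_mul_conjTranspose_self A).eigenvalues i := by
  refine Real.sq_sqrt ?_
  rcases isEmpty_or_nonempty (Fin m) with h | h
  · simp
  · exact le_ciInf fun i => A.eigenvalues_self_mul_conjTranspose_nonneg i

/-- `‖Aᵀ w‖² ≤ σmax² ‖w‖²`. -/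
lemma L2 {m n : ℕ} (A : Matrix (Fin m) (Fin n) ℝ) (w : Fin m → ℝ) :
    ∑ j, ((Aᵀ *ᵥ w) j)^2 ≤ specNorm A ^ 2 * ∑ i, (w i)^2 := by
  rw [specNorm_sq, ← AAt_quad]
  exact (rayleigh_le _ _ w).2

/-- `σmin² ‖w‖² ≤ ‖Aᵀ w‖²`. -/
lemma L1 {m n : ℕ} (A : Matrix (Fin m) (Fin n) ℝ) (w : Fin m → ℝ) :
    sigMin A ^ 2 * ∑ i, (w i)^2 ≤ ∑ j, ((Aᵀ *ᵥ w) j)^2 := by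
  rw [sigMin_sq, ← AAt_quad]
  exact (rayleigh_le _ _ w).1

/-- `‖A u‖² ≤ σmax² ‖u‖²`. -/
lemma L3 {m n : ℕ} (A : Matrix (Fin m) (Fin n) ℝ) (u : Fin n → ℝ) :
    ∑ i, ((A *ᵥ u) i)^2 ≤ specNorm A ^ 2 * ∑ j, (u j)^2 := by
  set c := ∑ i, ((A *ᵥ u) i)^2 with hc
  have hc0 : 0 ≤ c := Finset.sum_nonneg fun i _ => sq_nonneg _
  have hK : 0 ≤ specNorm A ^ 2 * ∑ j, (u j)^2 := by positivity
  have hid : c = ∑ j, (Aᵀ *ᵥ (A *ᵥ u)) j * u j := by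
    have : c = (A *ᵥ u) ⬝ᵥ (A *ᵥ u) := by simp [hc, dotProduct, pow_two]
    rw [this, dotProduct_mulVec, ← mulVec_transpose]
    rfl
  have hcs : c^2 ≤ (∑ j, ((Aᵀ *ᵥ (A *ᵥ u)) j)^2) * ∑ j, (u j)^2 := by
    rw [hid]; exact Finset.sum_mul_sq_le_sq_mul_sq _ _ _
  have h2 : (∑ j, ((Aᵀ *ᵥ (A *ᵥ u)) j)^2) ≤ specNorm A ^ 2 * c := L2 A (A *ᵥ u)
  have key : c^2 ≤ (specNorm A ^ 2 * ∑ j, (u j)^2) * c := by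
    calc c^2 ≤ (∑ j, ((Aᵀ *ᵥ (A *ᵥ u)) j)^2) * ∑ j, (u j)^2 := hcs
    _ ≤ (specNorm A ^ 2 * c) * ∑ j, (u j)^2 := by
        apply mul_le_mul_of_nonneg_right h2 (Finset.sum_nonneg fun j _ => sq_nonneg _)
    _ = (specNorm A ^ 2 * ∑ j, (u j)^2) * c := by ring
  rcases eq_or_lt_of_le hc0 with h0 | h0
  · rw [← h0]; exact hK
  · have := le_of_mul_le_mul_right (by nlinarith : c * c ≤ (specNorm A ^ 2 * ∑ j, (u j)^2) * c) h0
    exact this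
lemma gamma_swap {m n₂ : ℕ} (AB : Matrix (Fin m) (Fin n₂) ℝ) (u : Fin n₂ → ℝ)
    (v : Fin m → ℝ) : ∑ j, (ABᵀ *ᵥ v) j * u j = ∑ i, v i * (AB *ᵥ u) i := by
  have h : (ABᵀ *ᵥ v) ⬝ᵥ u = v ⬝ᵥ (AB *ᵥ u) := by
    rw [mulVec_transpose, ← dotProduct_mulVec]
  simpa [dotProduct] using h

lemma part_neg {m n₂ : ℕ} (AB : Matrix (Fin m) (Fin n₂) ℝ) (d : Fin n₂ → ℝ)
    (hd : ∀ j, 0 < d j) (e : Fin m → ℝ) (he : ∀ i, 0 < e i)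
    (μ : ℝ) (hμ : μ < 0) (u : Fin n₂ → ℝ) (v : Fin m → ℝ) (hne : ¬(u = 0 ∧ v = 0))
    (E1 : ∀ j, -((d j)⁻¹ * u j) + (ABᵀ *ᵥ v) j = μ * u j)
    (E2 : ∀ i, (AB *ᵥ u) i + e i * v i = μ * v i) :
    μ ≤ -(⨅ j, (d j)⁻¹) ∧
    (1 / 2) * (((⨅ i, e i) - ⨆ j, (d j)⁻¹) -
      Real.sqrt (((⨆ j, (d j)⁻¹) + ⨅ i, e i) ^ 2 + 4 * specNorm AB ^ 2)) ≤ μ := by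
  set σ := specNorm AB with hσdef
  set θmax := ⨆ j, (d j)⁻¹ with hθmaxdef
  set θmin := ⨅ j, (d j)⁻¹ with hθmindef
  set emin := ⨅ i, e i with hemindef
  have hσ0 : 0 ≤ σ := specNorm_nonneg AB
  have hemin0 : 0 ≤ emin := by
    rcases isEmpty_or_nonempty (Fin m) with h | h
    · simp [hemindef]
    · rw [hemindef]; exact le_ciInf fun i => (he i).le
  have hege : ∀ i, emin ≤ e i := fun i => by rw [hemindef]; exact ciInf_le (Set.Finite.bddBelow (Set.finite_range e)) i
  have hθle : ∀ j, (d j)⁻¹ ≤ θmax := fun j => by rw [hθmaxdef]; exact le_ciSup (Set.Finite.bddAbove (Set.finite_range (fun j => (d j)⁻¹))) j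
  have hθge : ∀ j, θmin ≤ (d j)⁻¹ := fun j => by rw [hθmindef]; exact ciInf_le (Set.Finite.bddBelow (Set.finite_range (fun j => (d j)⁻¹))) j
  -- u ≠ 0
  have hu0 : u ≠ 0 := by
    intro hu
    apply hne
    refine ⟨hu, funext fun i => ?_⟩
    have h := E2 i
    rw [hu] at h
    simp only [Matrix.mulVec_zero, Pi.zero_apply, zero_add] at h
    have h2 : (e i - μ) * v i = 0 := by linear_combination h
    rcases mul_eq_zero.mp h2 with h' | h'
    · exfalso; linarith [he i]
    · exact h'
  obtain ⟨j₀, hj₀⟩ := Function.ne_iff.mp hu0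
  set α := ∑ j, (u j)^2 with hαdef
  set β := ∑ i, (v i)^2 with hβdef
  have hj₀' : u j₀ ≠ 0 := by simpa using hj₀
  have hα : 0 < α := by
    refine Finset.sum_pos' (fun j _ => sq_nonneg _) ⟨j₀, Finset.mem_univ _, ?_⟩
    positivity
  have hβ0 : 0 ≤ β := Finset.sum_nonneg fun i _ => sq_nonneg _
  have eq1 : μ * α + ∑ j, (d j)⁻¹ * (u j)^2 = ∑ j, (ABᵀ *ᵥ v) j * u j := by
    rw [Finset.mul_sum, ← Finset.sum_add_distrib]
    exact Finset.sum_congr rfl fun j _ => by linear_combination (-(u j)) * E1 j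
  set γ := ∑ i, v i * (AB *ᵥ u) i with hγdef
  have hswap : ∑ j, (ABᵀ *ᵥ v) j * u j = γ := gamma_swap AB u v
  have hAv : ∀ i, (AB *ᵥ u) i = (μ - e i) * v i := fun i => by linear_combination E2 i
  have hγv : γ = ∑ i, (μ - e i) * (v i)^2 := by
    rw [hγdef]
    exact Finset.sum_congr rfl fun i _ => by rw [hAv i]; ring
  have hγ0 : γ ≤ 0 := by
    rw [hγv]
    exact Finset.sum_nonpos fun i _ =>
      mul_nonpos_of_nonpos_of_nonneg (by linarith [he i]) (sq_nonneg _)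
  constructor
  · -- μ ≤ -θmin
    have h1 : θmin * α ≤ ∑ j, (d j)⁻¹ * (u j)^2 := by
      rw [Finset.mul_sum]
      exact Finset.sum_le_sum fun j _ => mul_le_mul_of_nonneg_right (hθge j) (sq_nonneg _)
    nlinarith [eq1, hswap, hγ0, h1, hα]
  · -- lower bound
    have hβb : (emin - μ)^2 * β ≤ σ^2 * α := by
      have step1 : (emin - μ)^2 * β ≤ ∑ i, ((AB *ᵥ u) i)^2 := by
        rw [Finset.mul_sum]
        refine Finset.sum_le_sum fun i _ => ?_
        rw [hAv i, mul_pow]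
        have h1 : (emin - μ)^2 ≤ (μ - e i)^2 := by nlinarith [hege i, he i]
        exact mul_le_mul_of_nonneg_right h1 (sq_nonneg _)
      exact step1.trans (L3 AB u)
    have hγsq : γ^2 ≤ (σ^2 * α) * β := by
      have hcs : γ^2 ≤ β * ∑ i, ((AB *ᵥ u) i)^2 := by
        rw [hγdef, hβdef]
        exact Finset.sum_mul_sq_le_sq_mul_sq _ _ _
      calc γ^2 ≤ β * ∑ i, ((AB *ᵥ u) i)^2 := hcs
        _ ≤ β * (σ^2 * α) := mul_le_mul_of_nonneg_left (L3 AB u) hβ0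
        _ = (σ^2 * α) * β := by ring
    have hσα : 0 ≤ σ^2 * α := by positivity
    have h4 : (γ * (emin - μ))^2 ≤ (σ^2 * α)^2 := by
      nlinarith [hγsq, hβb, hσα, sq_nonneg (emin - μ), sq_nonneg γ]
    have hγt : -(σ^2 * α) ≤ γ * (emin - μ) := (sqBound h4 hσα).1
    have hθub : ∑ j, (d j)⁻¹ * (u j)^2 ≤ θmax * α := by
      rw [Finset.mul_sum]
      exact Finset.sum_le_sum fun j _ => mul_le_mul_of_nonneg_right (hθle j) (sq_nonneg _)
    -- μ α = γ - ∑θu² ≥ γ - θmax α; multiply by (emin - μ) > 0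
    have ht : 0 < emin - μ := by linarith
    have hkey : 0 ≤ μ^2 + (θmax - emin)*μ + (-(θmax*emin) - σ^2) → False → True := fun _ _ => trivial
    have hquad : μ^2 + (θmax - emin)*μ + (-(θmax*emin) - σ^2) ≤ 0 := by
      have hμα : γ - θmax * α ≤ μ * α := by linarith [eq1, hswap, hθub]
      -- multiply by (emin - μ):
      have h5 : (γ - θmax * α) * (emin - μ) ≤ μ * α * (emin - μ) :=
        mul_le_mul_of_nonneg_right hμα ht.le
      nlinarith [hγt, h5, hα]
    have := (quadLB hquad).1
    have harg : (θmax - emin)^2 - 4*((-(θmax*emin)) - σ^2) = (θmax + emin)^2 + 4*σ^2 := by ring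
    rw [show (-(θmax*emin) - σ^2) = (-(θmax*emin)) - σ^2 by ring, harg] at this
    linarith
lemma part_pos {m n₂ : ℕ} (AB : Matrix (Fin m) (Fin n₂) ℝ) (d : Fin n₂ → ℝ)
    (hd : ∀ j, 0 < d j) (e : Fin m → ℝ) (he : ∀ i, 0 < e i)
    (μ : ℝ) (hμ : 0 < μ) (u : Fin n₂ → ℝ) (v : Fin m → ℝ) (hne : ¬(u = 0 ∧ v = 0))
    (E1 : ∀ j, -((d j)⁻¹ * u j) + (ABᵀ *ᵥ v) j = μ * u j)
    (E2 : ∀ i, (AB *ᵥ u) i + e i * v i = μ * v i) :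
    (μ ≤ (1 / 2) * ((⨆ i, e i) + Real.sqrt ((⨆ i, e i) ^ 2 + 4 * specNorm AB ^ 2))) ∧
    ((1 / 2) * (((⨅ i, e i) - ⨆ j, (d j)⁻¹) +
      Real.sqrt (((⨆ j, (d j)⁻¹) + ⨅ i, e i) ^ 2 + 4 * sigMin AB ^ 2)) ≤ μ) := by
  set σ := specNorm AB with hσdef
  set sm := sigMin AB with hsmdef
  set θmax := ⨆ j, (d j)⁻¹ with hθmaxdef
  set emin := ⨅ i, e i with hemindef
  set emax := ⨆ i, e i with hemaxdef
  clear_value σ sm θmax emin emax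
  have hσ0 : 0 ≤ σ := by rw [hσdef]; exact specNorm_nonneg AB
  have hθpos : ∀ j, 0 < (d j)⁻¹ := fun j => inv_pos.mpr (hd j)
  have hege : ∀ i, emin ≤ e i := fun i => by
    rw [hemindef]; exact ciInf_le (Set.Finite.bddBelow (Set.finite_range e)) i
  have hele : ∀ i, e i ≤ emax := fun i => by
    rw [hemaxdef]; exact le_ciSup (Set.Finite.bddAbove (Set.finite_range e)) i
  have hθle : ∀ j, (d j)⁻¹ ≤ θmax := fun j => by
    rw [hθmaxdef]; exact le_ciSup (Set.Finite.bddAbove (Set.finite_range (fun j => (d j)⁻¹))) j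
  have hθmax0 : 0 ≤ θmax := by
    rcases isEmpty_or_nonempty (Fin n₂) with h | h
    · simp [hθmaxdef]
    · exact (hθpos (Classical.arbitrary _)).le.trans (hθle _)
  -- v ≠ 0
  have hv0 : v ≠ 0 := by
    intro hv
    apply hne
    refine ⟨funext fun j => ?_, hv⟩
    have h := E1 j
    rw [hv] at h
    simp only [Matrix.mulVec_zero, Pi.zero_apply, add_zero] at h
    have h2 : (μ + (d j)⁻¹) * u j = 0 := by linear_combination -h
    rcases mul_eq_zero.mp h2 with h' | h'
    · exfalso; nlinarith [hθpos j]
    · exact h'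
  obtain ⟨i₀, hi₀⟩ := Function.ne_iff.mp hv0
  have hi₀' : v i₀ ≠ 0 := by simpa using hi₀
  have hemin0 : 0 ≤ emin := by
    have : Nonempty (Fin m) := ⟨i₀⟩
    rw [hemindef]
    exact le_ciInf fun i => (he i).le
  set α := ∑ j, (u j)^2 with hαdef
  set β := ∑ i, (v i)^2 with hβdef
  clear_value α β
  have hβ : 0 < β := by
    rw [hβdef]
    refine Finset.sum_pos' (fun i _ => sq_nonneg _) ⟨i₀, Finset.mem_univ _, ?_⟩
    positivity
  have hα0 : 0 ≤ α := by rw [hαdef]; exact Finset.sum_nonneg fun j _ => sq_nonneg _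
  have hAtv : ∀ j, (ABᵀ *ᵥ v) j = (μ + (d j)⁻¹) * u j := fun j => by linear_combination E1 j
  set γ := ∑ i, v i * (AB *ᵥ u) i with hγdef
  set γ' := ∑ j, (ABᵀ *ᵥ v) j * u j with hγ'def
  clear_value γ γ'
  have hswap : γ' = γ := by rw [hγdef, hγ'def]; exact gamma_swap AB u v
  have eq2 : μ * β = γ + ∑ i, e i * (v i)^2 := by
    rw [hγdef, hβdef, ← Finset.sum_add_distrib, Finset.mul_sum]
    exact Finset.sum_congr rfl fun i _ => by linear_combination (-(v i)) * E2 i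
  have γform : γ' = ∑ j, (μ + (d j)⁻¹) * (u j)^2 := by
    rw [hγ'def]
    exact Finset.sum_congr rfl fun j _ => by rw [hAtv j]; ring
  constructor
  · -- upper bound
    have hαb : μ^2 * α ≤ σ^2 * β := by
      have step1 : μ^2 * α ≤ ∑ j, ((ABᵀ *ᵥ v) j)^2 := by
        rw [hαdef, Finset.mul_sum]
        refine Finset.sum_le_sum fun j _ => ?_
        rw [hAtv j, mul_pow]
        have h1 : μ^2 ≤ (μ + (d j)⁻¹)^2 := by nlinarith [hθpos j]
        exact mul_le_mul_of_nonneg_right h1 (sq_nonneg _)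
      refine step1.trans ?_
      rw [hσdef, hβdef]
      exact L2 AB v
    have hγsq : γ'^2 ≤ (σ^2 * β) * α := by
      have hcs : γ'^2 ≤ (∑ j, ((ABᵀ *ᵥ v) j)^2) * α := by
        rw [hγ'def, hαdef]
        
        exact Finset.sum_mul_sq_le_sq_mul_sq _ _ _
      refine hcs.trans ?_
      rw [hσdef, hβdef]
      exact mul_le_mul_of_nonneg_right (L2 AB v) hα0
    have hσβ : 0 ≤ σ^2 * β := by positivity
    have h4 : (γ' * μ)^2 ≤ (σ^2 * β)^2 := by
      nlinarith [hγsq, hαb, hσβ, sq_nonneg μ, sq_nonneg γ']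
    have hγμ : γ' * μ ≤ σ^2 * β := (sqBound h4 hσβ).2
    have hev : ∑ i, e i * (v i)^2 ≤ emax * β := by
      rw [hβdef, Finset.mul_sum]
      exact Finset.sum_le_sum fun i _ => mul_le_mul_of_nonneg_right (hele i) (sq_nonneg _)
    have hquad : μ^2 + (-emax)*μ + (-σ^2) ≤ 0 := by
      have h5 : μ * β * μ = (γ + ∑ i, e i * (v i)^2) * μ := by rw [eq2]
      nlinarith [hγμ, hev, hβ, hswap, h5, hμ]
    have := (quadLB hquad).2
    have harg : (-emax)^2 - 4*(-σ^2) = emax^2 + 4*σ^2 := by ring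
    rw [harg] at this
    linarith
  · -- lower bound
    have hγlow : sm^2 * β ≤ γ' * (μ + θmax) := by
      have step1 : ∑ j, ((ABᵀ *ᵥ v) j)^2 ≤ γ' * (μ + θmax) := by
        rw [γform, Finset.sum_mul]
        refine Finset.sum_le_sum fun j _ => ?_
        rw [hAtv j, mul_pow]
        have hint : 0 ≤ (μ + (d j)⁻¹) * (u j)^2 * (θmax - (d j)⁻¹) :=
          mul_nonneg (mul_nonneg (by nlinarith [hθpos j] : (0:ℝ) ≤ μ + (d j)⁻¹) (sq_nonneg (u j)))
            (by linarith [hθle j])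
        nlinarith [hint]
      rw [hsmdef, hβdef]
      exact (L1 AB v).trans step1
    have γup : γ ≤ (μ - emin) * β := by
      have hev : emin * β ≤ ∑ i, e i * (v i)^2 := by
        rw [hβdef, Finset.mul_sum]
        exact Finset.sum_le_sum fun i _ => mul_le_mul_of_nonneg_right (hege i) (sq_nonneg _)
      linarith [eq2, hev]
    have hquad : 0 ≤ μ^2 + (θmax - emin)*μ + (-(emin*θmax) - sm^2) := by
      have h6 : γ * (μ + θmax) ≤ (μ - emin) * β * (μ + θmax) :=
        mul_le_mul_of_nonneg_right γup (by linarith)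
      have h7 : sm^2 * β ≤ ((μ - emin) * (μ + θmax)) * β := by
        calc sm^2 * β ≤ γ' * (μ + θmax) := hγlow
          _ = γ * (μ + θmax) := by rw [hswap]
          _ ≤ (μ - emin) * β * (μ + θmax) := h6
          _ = ((μ - emin) * (μ + θmax)) * β := by ring
      have h8 : sm^2 ≤ (μ - emin) * (μ + θmax) := le_of_mul_le_mul_right h7 hβ
      have h9 : 0 ≤ (μ - emin) * (μ + θmax) - sm^2 := sub_nonneg.mpr h8
      have h10 : (μ - emin) * (μ + θmax) - sm^2
          = μ^2 + (θmax - emin)*μ + (-(emin*θmax) - sm^2) := by ring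
      rw [← h10]
      exact h9
    have hc : -(emin*θmax) - sm^2 ≤ 0 := by
      have h9 : 0 ≤ emin * θmax := mul_nonneg hemin0 hθmax0
      have h10 : 0 ≤ sm^2 := sq_nonneg sm
      linarith
    have := quadGE hquad hc hμ
    have harg : (θmax - emin)^2 - 4*(-(emin*θmax) - sm^2) = (θmax + emin)^2 + 4*sm^2 := by ring
    rw [harg] at this
    linarith
section count
variable {m n₂ : ℕ}

/-- nontrivial intersection from dimension count -/
lemma dim_clash {E : Type*} [NormedAddCommGroup E] [InnerProductSpace ℝ E]
    [FiniteDimensional ℝ E] (W₁ W₂ : Submodule ℝ E)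
    (h : Module.finrank ℝ E < Module.finrank ℝ W₁ + Module.finrank ℝ W₂) :
    ∃ x : E, x ≠ 0 ∧ x ∈ W₁ ∧ x ∈ W₂ := by
  have hsum := Submodule.finrank_sup_add_finrank_inf_eq W₁ W₂
  have hle : Module.finrank ℝ ↥(W₁ ⊔ W₂) ≤ Module.finrank ℝ E := (W₁ ⊔ W₂).finrank_le
  have hpos : 0 < Module.finrank ℝ ↥(W₁ ⊓ W₂) := by omega
  have : Nontrivial ↥(W₁ ⊓ W₂) := Module.finrank_pos_iff.mp hpos
  obtain ⟨y, hy⟩ := exists_ne (0 : ↥(W₁ ⊓ W₂))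
  refine ⟨↑y, ?_, (Submodule.mem_inf.mp y.2).1, (Submodule.mem_inf.mp y.2).2⟩
  simpa [Submodule.coe_eq_zero] using hy

lemma span_basis_facts {ι : Type*} [Fintype ι] [DecidableEq ι]
    (b : OrthonormalBasis ι ℝ (EuclideanSpace ℝ ι)) (p : ι → Prop) [DecidablePred p] :
    Module.finrank ℝ ↥(Submodule.span ℝ (⇑b.toBasis '' {i | p i})) = Fintype.card {i // p i}
      ∧ ∀ x ∈ Submodule.span ℝ (⇑b.toBasis '' {i | p i}), ∀ i, ¬ p i → b.repr x i = 0 := by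
  constructor
  · have hli : LinearIndependent ℝ (fun i : {i // p i} => b.toBasis i.1) :=
      b.toBasis.linearIndependent.comp Subtype.val Subtype.val_injective
    have himg : ⇑b.toBasis '' {i | p i} = Set.range (fun i : {i // p i} => b.toBasis i.1) :=
      Set.image_eq_range _ _
    rw [himg]
    exact finrank_span_eq_card hli
  · intro x hx i hi
    rw [← b.coe_toBasis_repr_apply]
    have hsupp := (b.toBasis.mem_span_image).mp hx
    by_contra hne
    exact hi (hsupp (Finsupp.mem_support_iff.mpr hne))

lemma counting (AB : Matrix (Fin m) (Fin n₂) ℝ) (d : Fin n₂ → ℝ) (hd : ∀ j, 0 < d j)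
    (e : Fin m → ℝ) (he : ∀ i, 0 < e i)
    (M : Matrix (Fin n₂ ⊕ Fin m) (Fin n₂ ⊕ Fin m) ℝ)
    (hMdef : M = Matrix.fromBlocks (-(Matrix.diagonal d)⁻¹) ABᵀ AB (Matrix.diagonal e))
    (hM : M.IsHermitian) :
    (Finset.univ.filter fun i => hM.eigenvalues i < 0).card = n₂ ∧
    (Finset.univ.filter fun i => 0 < hM.eigenvalues i).card = m := by
  classical
  have hinv : (Matrix.diagonal d)⁻¹ = Matrix.diagonal (fun j => (d j)⁻¹) := by
    refine Matrix.inv_eq_right_inv ?_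
    rw [Matrix.diagonal_mul_diagonal]
    convert Matrix.diagonal_one with j
    exact mul_inv_cancel₀ (hd j).ne'
  -- quadratic form formula
  have hq : ∀ (u : Fin n₂ → ℝ) (v : Fin m → ℝ),
      (Sum.elim u v) ⬝ᵥ (M *ᵥ Sum.elim u v)
        = -(∑ j, (d j)⁻¹ * (u j)^2) + 2*(∑ j, (ABᵀ *ᵥ v) j * u j) + ∑ i, e i * (v i)^2 := by
    intro u v
    rw [hMdef, hinv, fromBlocks_mulVec, sumElim_dotProduct_sumElim,
      dotProduct_add, dotProduct_add, Sum.elim_comp_inl, Sum.elim_comp_inr]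
    have p1 : u ⬝ᵥ ((-(Matrix.diagonal fun j => (d j)⁻¹)) *ᵥ u) = -(∑ j, (d j)⁻¹ * (u j)^2) := by
      rw [neg_mulVec, dotProduct_neg]
      congr 1
      simp only [dotProduct, mulVec_diagonal]
      exact Finset.sum_congr rfl fun j _ => by ring
    have p2 : u ⬝ᵥ (ABᵀ *ᵥ v) = ∑ j, (ABᵀ *ᵥ v) j * u j := by
      simp only [dotProduct]
      exact Finset.sum_congr rfl fun j _ => by ring
    have p3 : v ⬝ᵥ (AB *ᵥ u) = ∑ j, (ABᵀ *ᵥ v) j * u j := by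
      rw [gamma_swap AB u v]
      rfl
    have p4 : v ⬝ᵥ ((Matrix.diagonal e) *ᵥ v) = ∑ i, e i * (v i)^2 := by
      simp only [dotProduct, mulVec_diagonal]
      exact Finset.sum_congr rfl fun i _ => by ring
    rw [p1, p2, p3, p4]
    ring
  -- the orthonormal eigenbasis
  set b := hM.eigenvectorBasis with hbdef
  have hfinE : Module.finrank ℝ (EuclideanSpace ℝ (Fin n₂ ⊕ Fin m)) = n₂ + m := by
    simp [finrank_euclideanSpace]
  have hcardκ : Fintype.card (Fin n₂ ⊕ Fin m) = n₂ + m := by simp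
  -- the two injections
  let Lu : (Fin n₂ → ℝ) →ₗ[ℝ] EuclideanSpace ℝ (Fin n₂ ⊕ Fin m) :=
    { toFun := fun u => WithLp.toLp 2 (Sum.elim u 0)
      map_add' := by intro a c; ext i; cases i <;> simp
      map_smul' := by intro r a; ext i; cases i <;> simp }
  let Lv : (Fin m → ℝ) →ₗ[ℝ] EuclideanSpace ℝ (Fin n₂ ⊕ Fin m) :=
    { toFun := fun w => WithLp.toLp 2 (Sum.elim (fun j => d j * (ABᵀ *ᵥ w) j) w)
      map_add' := by
        intro a c; ext i
        cases i with
        | inl j => simp [Matrix.mulVec_add, mul_add]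
        | inr i => simp
      map_smul' := by
        intro r a; ext i
        cases i with
        | inl j => simp [Matrix.mulVec_smul]; ring
        | inr i => simp }
  have hLu_inj : Function.Injective Lu := by
    intro a c h
    funext j
    exact congrFun (congrArg (fun (z : EuclideanSpace ℝ (Fin n₂ ⊕ Fin m)) => WithLp.ofLp z) h) (Sum.inl j)
  have hLv_inj : Function.Injective Lv := by
    intro a c h
    funext i
    exact congrFun (congrArg (fun (z : EuclideanSpace ℝ (Fin n₂ ⊕ Fin m)) => WithLp.ofLp z) h) (Sum.inr i)
  have hfinU : Module.finrank ℝ ↥(LinearMap.range Lu) = n₂ := by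
    rw [LinearMap.finrank_range_of_inj hLu_inj]
    simp
  have hfinV : Module.finrank ℝ ↥(LinearMap.range Lv) = m := by
    rw [LinearMap.finrank_range_of_inj hLv_inj]
    simp
  -- claim 1 : n₂ ≤ #negatives
  have claim1 : n₂ ≤ (Finset.univ.filter fun i => hM.eigenvalues i < 0).card := by
    by_contra hlt
    push_neg at hlt
    obtain ⟨hWrank, hWsupp⟩ := span_basis_facts b (fun i => ¬ hM.eigenvalues i < 0)
    set W := Submodule.span ℝ (⇑b.toBasis '' {i | ¬ hM.eigenvalues i < 0}) with hWdef
    have hcts : Fintype.card {i // ¬ hM.eigenvalues i < 0}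
        = (n₂ + m) - (Finset.univ.filter fun i => hM.eigenvalues i < 0).card := by
      rw [Fintype.card_subtype]
      have := Finset.card_filter_add_card_filter_not
        (s := (Finset.univ : Finset (Fin n₂ ⊕ Fin m)))
        (p := fun i => hM.eigenvalues i < 0)
      simp only [Finset.card_univ, hcardκ] at this
      omega
    have hcardle : (Finset.univ.filter fun i => hM.eigenvalues i < 0).card ≤ n₂ + m := by
      calc _ ≤ (Finset.univ : Finset (Fin n₂ ⊕ Fin m)).card := Finset.card_filter_le _ _
        _ = n₂ + m := by rw [Finset.card_univ, hcardκ]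
    obtain ⟨x, hx0, hxW, hxU⟩ := dim_clash W (LinearMap.range Lu) (by
      rw [hfinE, hfinU, hWrank, hcts]; omega)
    obtain ⟨u, hu⟩ := hxU
    have hune : u ≠ 0 := by
      intro h0
      apply hx0
      rw [← hu, h0, map_zero]
    obtain ⟨j₀, hj₀⟩ := Function.ne_iff.mp hune
    have hj₀' : u j₀ ≠ 0 := by simpa using hj₀
    have hx : x = (Sum.elim u 0 : (Fin n₂ ⊕ Fin m) → ℝ) := by rw [← hu]; rfl
    have hneg : x ⬝ᵥ (M *ᵥ x) < 0 := by
      rw [hx, hq u 0]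
      have h1 : (ABᵀ *ᵥ (0 : Fin m → ℝ)) = 0 := Matrix.mulVec_zero _
      rw [h1]
      simp only [Pi.zero_apply, mul_zero, zero_mul, Finset.sum_const_zero, add_zero,
        ne_eq, OfNat.ofNat_ne_zero, not_false_eq_true, zero_pow]
      have h2 : 0 < ∑ j, (d j)⁻¹ * (u j)^2 := by
        refine Finset.sum_pos' (fun j _ => mul_nonneg (inv_pos.mpr (hd j)).le (sq_nonneg _))
          ⟨j₀, Finset.mem_univ _, ?_⟩
        exact mul_pos (inv_pos.mpr (hd j₀)) (by positivity)
      linarith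
    have hpos : 0 ≤ x ⬝ᵥ (M *ᵥ x) := by
      rw [rayleigh M hM x]
      refine Finset.sum_nonneg fun i _ => ?_
      by_cases h : hM.eigenvalues i < 0
      · rw [hWsupp x hxW i (not_not_intro h)]
        simp
      · exact mul_nonneg (not_lt.mp h) (sq_nonneg _)
    linarith
  -- claim 2 : m ≤ #positives
  have claim2 : m ≤ (Finset.univ.filter fun i => 0 < hM.eigenvalues i).card := by
    by_contra hlt
    push_neg at hlt
    obtain ⟨hWrank, hWsupp⟩ := span_basis_facts b (fun i => ¬ 0 < hM.eigenvalues i)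
    set W := Submodule.span ℝ (⇑b.toBasis '' {i | ¬ 0 < hM.eigenvalues i}) with hWdef
    have hcts : Fintype.card {i // ¬ 0 < hM.eigenvalues i}
        = (n₂ + m) - (Finset.univ.filter fun i => 0 < hM.eigenvalues i).card := by
      rw [Fintype.card_subtype]
      have := Finset.card_filter_add_card_filter_not
        (s := (Finset.univ : Finset (Fin n₂ ⊕ Fin m)))
        (p := fun i => 0 < hM.eigenvalues i)
      simp only [Finset.card_univ, hcardκ] at this
      omega
    have hcardle : (Finset.univ.filter fun i => 0 < hM.eigenvalues i).card ≤ n₂ + m := by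
      calc _ ≤ (Finset.univ : Finset (Fin n₂ ⊕ Fin m)).card := Finset.card_filter_le _ _
        _ = n₂ + m := by rw [Finset.card_univ, hcardκ]
    obtain ⟨x, hx0, hxW, hxV⟩ := dim_clash W (LinearMap.range Lv) (by
      rw [hfinE, hfinV, hWrank, hcts]; omega)
    obtain ⟨w, hw⟩ := hxV
    have hwne : w ≠ 0 := by
      intro h0
      apply hx0
      rw [← hw, h0, map_zero]
    obtain ⟨i₀, hi₀⟩ := Function.ne_iff.mp hwne
    have hi₀' : w i₀ ≠ 0 := by simpa using hi₀
    have hx : x = (Sum.elim (fun j => d j * (ABᵀ *ᵥ w) j) w : (Fin n₂ ⊕ Fin m) → ℝ) := by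
      rw [← hw]; rfl
    have hposq : 0 < x ⬝ᵥ (M *ᵥ x) := by
      rw [hx, hq (fun j => d j * (ABᵀ *ᵥ w) j) w]
      have s1 : ∑ j, (d j)⁻¹ * (d j * (ABᵀ *ᵥ w) j)^2 = ∑ j, d j * ((ABᵀ *ᵥ w) j)^2 := by
        refine Finset.sum_congr rfl fun j _ => ?_
        have hne := (hd j).ne'
        field_simp
      have s2 : ∑ j, (ABᵀ *ᵥ w) j * (d j * (ABᵀ *ᵥ w) j) = ∑ j, d j * ((ABᵀ *ᵥ w) j)^2 := by
        refine Finset.sum_congr rfl fun j _ => by ring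
      rw [s1, s2]
      have h3 : 0 ≤ ∑ j, d j * ((ABᵀ *ᵥ w) j)^2 :=
        Finset.sum_nonneg fun j _ => mul_nonneg (hd j).le (sq_nonneg _)
      have h4 : 0 < ∑ i, e i * (w i)^2 := by
        refine Finset.sum_pos' (fun i _ => mul_nonneg (he i).le (sq_nonneg _))
          ⟨i₀, Finset.mem_univ _, ?_⟩
        exact mul_pos (he i₀) (by positivity)
      linarith
    have hnegq : x ⬝ᵥ (M *ᵥ x) ≤ 0 := by
      rw [rayleigh M hM x]
      refine Finset.sum_nonpos fun i _ => ?_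
      by_cases h : 0 < hM.eigenvalues i
      · rw [hWsupp x hxW i (not_not_intro h)]
        simp
      · exact mul_nonpos_of_nonpos_of_nonneg (not_lt.mp h) (sq_nonneg _)
    linarith
  -- combine
  have hdisj : Disjoint (Finset.univ.filter fun i => hM.eigenvalues i < 0)
      (Finset.univ.filter fun i => 0 < hM.eigenvalues i) := by
    rw [Finset.disjoint_left]
    intro i hi hi2
    rw [Finset.mem_filter] at hi hi2
    exact absurd hi2.2 (not_lt.mpr hi.2.le)
  have htot : (Finset.univ.filter fun i => hM.eigenvalues i < 0).card
      + (Finset.univ.filter fun i => 0 < hM.eigenvalues i).card ≤ n₂ + m := by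
    rw [← Finset.card_union_of_disjoint hdisj]
    calc _ ≤ (Finset.univ : Finset (Fin n₂ ⊕ Fin m)).card := Finset.card_le_card (Finset.union_subset (Finset.filter_subset _ _) (Finset.filter_subset _ _))
      _ = n₂ + m := by rw [Finset.card_univ, hcardκ]
  omega

end count

/-- Theorem 3.2 of the paper: with `Θ_B` diagonal positive and `D*` diagonal positive,
`M̄ = [[−Θ_B⁻¹, A_Bᵀ],[A_B, D*]]` has exactly `n₂` negative and `m` positive
eigenvalues, every negative eigenvalue `μ̄` satisfies
`μ̄ ≤ −min_j (Θ_B⁻¹)_jj` and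
`μ̄ ≥ ½((min_i D*_ii − max_j (Θ_B⁻¹)_jj) − √((max_j (Θ_B⁻¹)_jj + min_i D*_ii)² + 4σ_max(A_B)²))`,
and every positive eigenvalue `μ̄` satisfies
`μ̄ ≤ ½(max_i D*_ii + √((max_i D*_ii)² + 4σ_max(A_B)²))` and
`μ̄ ≥ ½((min_i D*_ii − max_j (Θ_B⁻¹)_jj) + √((max_j (Θ_B⁻¹)_jj + min_i D*_ii)² + 4σ_min(A_B)²))`. -/
theorem stmt_18 {m n₂ : ℕ} (hmn : m ≤ n₂) (AB : Matrix (Fin m) (Fin n₂) ℝ)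
    (d : Fin n₂ → ℝ) (hd : ∀ j, 0 < d j)
    (e : Fin m → ℝ) (he : ∀ i, 0 < e i)
    (M : Matrix (Fin n₂ ⊕ Fin m) (Fin n₂ ⊕ Fin m) ℝ)
    (hMdef : M = Matrix.fromBlocks (-(Matrix.diagonal d)⁻¹) ABᵀ AB (Matrix.diagonal e))
    (hM : M.IsHermitian) :
    (Finset.univ.filter fun i => hM.eigenvalues i < 0).card = n₂ ∧
    (Finset.univ.filter fun i => 0 < hM.eigenvalues i).card = m ∧
    (∀ μ : ℝ, μ < 0 →
      ∀ x : Fin n₂ ⊕ Fin m → ℝ, x ≠ 0 → M.mulVec x = μ • x →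
      (μ ≤ -(⨅ j, (Matrix.diagonal d)⁻¹ j j)) ∧
      ((1 / 2) * (((⨅ i, e i) - ⨆ j, (Matrix.diagonal d)⁻¹ j j) -
        Real.sqrt (((⨆ j, (Matrix.diagonal d)⁻¹ j j) + ⨅ i, e i) ^ 2 +
          4 * specNorm AB ^ 2)) ≤ μ)) ∧
    (∀ μ : ℝ, 0 < μ →
      ∀ x : Fin n₂ ⊕ Fin m → ℝ, x ≠ 0 → M.mulVec x = μ • x →
      (μ ≤ (1 / 2) * ((⨆ i, e i) +
        Real.sqrt ((⨆ i, e i) ^ 2 + 4 * specNorm AB ^ 2))) ∧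
      ((1 / 2) * (((⨅ i, e i) - ⨆ j, (Matrix.diagonal d)⁻¹ j j) +
        Real.sqrt (((⨆ j, (Matrix.diagonal d)⁻¹ j j) + ⨅ i, e i) ^ 2 +
          4 * sigMin AB ^ 2)) ≤ μ)) := by
  classical
  have hinv : (Matrix.diagonal d)⁻¹ = Matrix.diagonal (fun j => (d j)⁻¹) := by
    refine Matrix.inv_eq_right_inv ?_
    rw [Matrix.diagonal_mul_diagonal]
    convert Matrix.diagonal_one with j
    exact mul_inv_cancel₀ (hd j).ne'
  simp only [hinv, Matrix.diagonal_apply_eq]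
  obtain ⟨hc1, hc2⟩ := counting AB d hd e he M hMdef hM
  refine ⟨hc1, hc2, ?_, ?_⟩
  · intro μ hμ x hx0 heig
    set u := fun j => x (Sum.inl j) with hudef
    set v := fun i => x (Sum.inr i) with hvdef
    have hxe : x = Sum.elim u v := by funext k; cases k <;> rfl
    rw [hMdef, hinv, hxe, fromBlocks_mulVec] at heig
    have hne : ¬(u = 0 ∧ v = 0) := by
      rintro ⟨hu, hv⟩
      apply hx0
      funext k
      cases k with
      | inl j => exact congrFun hu j
      | inr i => exact congrFun hv i
    have E1 : ∀ j, -((d j)⁻¹ * u j) + (ABᵀ *ᵥ v) j = μ * u j := by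
      intro j
      have h := congrFun heig (Sum.inl j)
      simpa [Matrix.neg_mulVec, Matrix.mulVec_diagonal] using h
    have E2 : ∀ i, (AB *ᵥ u) i + e i * v i = μ * v i := by
      intro i
      have h := congrFun heig (Sum.inr i)
      simpa [Matrix.mulVec_diagonal] using h
    exact part_neg AB d hd e he μ hμ u v hne E1 E2
  · intro μ hμ x hx0 heig
    set u := fun j => x (Sum.inl j) with hudef
    set v := fun i => x (Sum.inr i) with hvdef
    have hxe : x = Sum.elim u v := by funext k; cases k <;> rfl
    rw [hMdef, hinv, hxe, fromBlocks_mulVec] at heig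
    have hne : ¬(u = 0 ∧ v = 0) := by
      rintro ⟨hu, hv⟩
      apply hx0
      funext k
      cases k with
      | inl j => exact congrFun hu j
      | inr i => exact congrFun hv i
    have E1 : ∀ j, -((d j)⁻¹ * u j) + (ABᵀ *ᵥ v) j = μ * u j := by
      intro j
      have h := congrFun heig (Sum.inl j)
      simpa [Matrix.neg_mulVec, Matrix.mulVec_diagonal] using h
    have E2 : ∀ i, (AB *ᵥ u) i + e i * v i = μ * v i := by
      intro i
      have h := congrFun heig (Sum.inr i)
      simpa [Matrix.mulVec_diagonal] using h
    exact part_pos AB d hd e he μ hμ u v hne E1 E2
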